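/- Let Γ be a graph on vertices {1,...,M} with a partition into n groups, and let C be an oriented cycle in Γ. Then either the image of C under the edge bijection lies entirely within E(Δₖ(Γ)) for some single group k, or the set of edges of C connecting different groups maps to an oriented cycle in the clasped graph Δ₀(Γ). -/

import Mathlib

/-- An oriented cycle: a nonempty closed directed walk with no repeated edges. -/
def IsOrientedCycle {Edge V : Type*} (ends : Edge → V × V) (es : List Edge) : Prop :=
  es ≠ [] ∧ es.Nodup ∧
    ∀ i : Fin es.length,
      (ends (es.get i)).2
        = (ends (es.get ⟨(i.val + 1) % es.length, Nat.mod_lt _ i.pos⟩)).1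

lemma master {Edge V : Type*} {n : ℕ} (b : V → Fin n) (ends : Edge → V × V)
    (es : List Edge) : ∀ (a : Fin n),
      es.Chain' (fun e e' => (ends e).2 = (ends e').1) →
      (∀ e, es.head? = some e → b (ends e).1 = a) →
      (es.filter (fun e => decide (b (ends e).1 ≠ b (ends e).2))).Chain'
          (fun e e' => b (ends e).2 = b (ends e').1) ∧
      (∀ e, (es.filter (fun e => decide (b (ends e).1 ≠ b (ends e).2))).head? = some e →
        b (ends e).1 = a) ∧
      (es.filter (fun e => decide (b (ends e).1 ≠ b (ends e).2)) = [] →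
        (∀ e ∈ es, b (ends e).1 = a ∧ b (ends e).2 = a) ∧
        (∀ e, es.getLast? = some e → b (ends e).2 = a)) ∧
      (∀ e e', (es.filter (fun e => decide (b (ends e).1 ≠ b (ends e).2))).getLast? = some e →
        es.getLast? = some e' → b (ends e).2 = b (ends e').2) := by
  induction es with
  | nil => simp [List.Chain']
  | cons x t ih =>
    intro a hchain hhead
    have hx : b (ends x).1 = a := hhead x rfl
    rw [List.Chain', List.isChain_cons] at hchain
    obtain ⟨hlink, hchain'⟩ := hchain
    by_cases hp : b (ends x).1 = b (ends x).2
    · -- non-crossing edge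
      have hfx : (fun e => decide (b (ends e).1 ≠ b (ends e).2)) x = false := by
        simp [hp]
      have hfilter : (x :: t).filter (fun e => decide (b (ends e).1 ≠ b (ends e).2))
          = t.filter (fun e => decide (b (ends e).1 ≠ b (ends e).2)) := by
        simp [List.filter_cons, hp]
      have hhead' : ∀ e, t.head? = some e → b (ends e).1 = a := by
        intro e he
        have := hlink e he
        rw [← this, ← hp, hx]
      obtain ⟨h1, h2, h3, h4⟩ := ih a hchain' hhead'
      rw [hfilter]
      refine ⟨h1, h2, ?_, ?_⟩
      · intro hF
        obtain ⟨h3a, h3b⟩ := h3 hF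
        constructor
        · intro e he
          rcases List.mem_cons.mp he with rfl | he
          · exact ⟨hx, by rw [← hp, hx]⟩
          · exact h3a e he
        · intro e he
          cases t with
          | nil =>
            simp at he; subst he; rw [← hp, hx]
          | cons y t' =>
            rw [List.getLast?_cons_cons] at he
            exact h3b e he
      · intro e e' he he'
        cases t with
        | nil => simp at he
        | cons y t' =>
          rw [List.getLast?_cons_cons] at he'
          exact h4 e e' he he'
    · -- crossing edge
      have hfx : (fun e => decide (b (ends e).1 ≠ b (ends e).2)) x = true := by
        simp [hp]
      have hfilter : (x :: t).filter (fun e => decide (b (ends e).1 ≠ b (ends e).2))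
          = x :: t.filter (fun e => decide (b (ends e).1 ≠ b (ends e).2)) := by
        simp [List.filter_cons, hp]
      have hhead' : ∀ e, t.head? = some e → b (ends e).1 = b (ends x).2 := by
        intro e he; rw [← hlink e he]
      obtain ⟨h1, h2, h3, h4⟩ := ih (b (ends x).2) hchain' hhead'
      rw [hfilter]
      refine ⟨?_, ?_, ?_, ?_⟩
      · rw [List.Chain', List.isChain_cons]
        exact ⟨fun y hy => (h2 y hy).symm, h1⟩
      · intro e he; rw [List.head?_cons] at he
        injection he with he; subst he; exact hx
      · intro hF; simp at hF
      · intro e e' he he'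
        cases hFt : t.filter (fun e => decide (b (ends e).1 ≠ b (ends e).2)) with
        | nil =>
          rw [hFt] at he
          simp at he; subst he
          obtain ⟨_, h3b⟩ := h3 hFt
          cases t with
          | nil => simp at he'; subst he'; rfl
          | cons y t' =>
            rw [List.getLast?_cons_cons] at he'
            exact (h3b e' he').symm
        | cons z F' =>
          rw [hFt] at he
          rw [List.getLast?_cons_cons] at he
          rw [← hFt] at he
          cases t with
          | nil => simp at hFt
          | cons y t' =>
            rw [List.getLast?_cons_cons] at he'
            exact h4 e e' he he'


/-- Let `Γ` be a directed graph (no tadpoles) with vertices partitioned into `n`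
groups via `b : V → Fin n`, and let `C` be an oriented cycle in `Γ`.  Then either
all edges of `C` lie within a single group `k` (so the image of `C` under the edge
bijection lies entirely within `E(Δₖ(Γ))`), or the edges of `C` connecting
different groups form (in order) an oriented cycle in the clasped graph `Δ₀(Γ)`,
whose edges are the crossing edges with endpoints `(b ∘ fst, b ∘ snd)`. -/
theorem stmt9 (Edge V : Type*) (n : ℕ) (b : V → Fin n)
    (ends : Edge → V × V)
    (htadpole : ∀ e : Edge, (ends e).1 ≠ (ends e).2)
    (es : List Edge) (hC : IsOrientedCycle ends es) :
    (∃ k : Fin n, ∀ e ∈ es, b (ends e).1 = k ∧ b (ends e).2 = k) ∨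
    IsOrientedCycle (fun e => (b (ends e).1, b (ends e).2))
      (es.filter (fun e => decide (b (ends e).1 ≠ b (ends e).2))) := by
  obtain ⟨hne, hnd, hcyc⟩ := hC
  have hNpos : 0 < es.length := List.length_pos_iff.mpr hne
  -- chain structure
  have hchain : es.Chain' (fun e e' => (ends e).2 = (ends e').1) := by
    rw [List.Chain', List.isChain_iff_getElem]
    intro i hi
    have hi1 : i + 1 < es.length := by omega
    have := hcyc ⟨i, by omega⟩
    simpa [Nat.mod_eq_of_lt hi1] using this
  -- wrap-around
  have hwrap : (ends (es.getLast hne)).2 = (ends (es.head hne)).1 := by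
    have := hcyc ⟨es.length - 1, by omega⟩
    have hmod : (es.length - 1 + 1) % es.length = 0 := by
      rw [Nat.sub_add_cancel hNpos, Nat.mod_self]
    rw [List.getLast_eq_getElem, List.head_eq_getElem]
    simpa [hmod, List.get_mk_zero] using this
  set a := b (ends (es.head hne)).1 with ha
  have hhead : ∀ e, es.head? = some e → b (ends e).1 = a := by
    intro e he
    rw [List.head?_eq_head hne] at he
    injection he with he; rw [← he]
  obtain ⟨h1, h2, h3, h4⟩ := master b ends es a hchain hhead
  set F := es.filter (fun e => decide (b (ends e).1 ≠ b (ends e).2)) with hF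
  by_cases hFe : F = []
  · left
    exact ⟨a, (h3 hFe).1⟩
  · right
    refine ⟨hFe, (List.filter_sublist (l := es)).nodup hnd, ?_⟩
    intro i
    have hFpos : 0 < F.length := List.length_pos_iff.mpr hFe
    by_cases hi : i.val + 1 < F.length
    · have := List.isChain_iff_getElem.mp h1 i.val (by omega)
      simpa [Nat.mod_eq_of_lt hi] using this
    · have hlast : i.val = F.length - 1 := by omega
      have hmod : (i.val + 1) % F.length = 0 := by
        rw [hlast, Nat.sub_add_cancel hFpos, Nat.mod_self]
      have e1 : F.get i = F.getLast hFe := by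
        rw [List.getLast_eq_getElem]
        congr 1
        exact Fin.ext hlast
      have e2 : F.get ⟨(i.val + 1) % F.length, Nat.mod_lt _ i.pos⟩ = F.head hFe := by
        simp only [hmod]
        rw [List.get_mk_zero]
      rw [e1, e2]
      show b (ends (F.getLast hFe)).2 = b (ends (F.head hFe)).1
      have hb1 : b (ends (F.getLast hFe)).2 = b (ends (es.getLast hne)).2 :=
        h4 _ _ ((List.getLast?_eq_getLast hFe)) (List.getLast?_eq_getLast hne)
      have hb2 : b (ends (F.head hFe)).1 = a :=
        h2 _ (List.head?_eq_head hFe)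
      rw [hb1, hwrap, hb2]
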